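/- arXiv:1804.06703 — 2 statements merged into one kernel-verified Lean document; each statement's English description precedes it below -/
import Mathlib

section
/- In an IC structure without outer cycles (satisfying all four conditions of the IC structure definition), conditions c1 and c2 hold automatically: for every inner vertex i, every non-inner vertex j at depth ≥ 2 in the rooted tree T_i has a_{i,j} odd, and every vertex j outside T_i has b_{i,j} = 0. -/
open scoped BigOperators

variable {V : Type*}

/-- `l` is a directed path in the digraph `E`. -/
def IsDiPath (E : V → V → Prop) (l : List V) : Prop :=
  l.Chain' E ∧ l.Nodup

/-- `l` is a directed cycle in the digraph `E`. -/
def IsDiCycle (E : V → V → Prop) (l : List V) : Prop :=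
  2 ≤ l.length ∧ l.Nodup ∧ l.Chain' E ∧
    ∀ h : l ≠ [], E (l.getLast h) (l.head h)

/-- `u` and `w` occur consecutively in the list `l`. -/
def ConsecIn (l : List V) (u w : V) : Prop :=
  ∃ l₁ l₂, l = l₁ ++ u :: w :: l₂

/-- `u → w` is an edge of the cycle represented by `l` (including the closing edge). -/
def CycleEdge (l : List V) (u w : V) : Prop :=
  ConsecIn l u w ∨ ∃ h : l ≠ [], l.getLast h = u ∧ l.head h = w

/-- `l` is an I-path from the inner vertex `a` to the inner vertex `b`:
a directed path from `a` to `b` passing through no other inner vertex. -/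
def IsIPath (E : V → V → Prop) (inner : Set V) (a b : V) (l : List V) : Prop :=
  IsDiPath E l ∧ l.head? = some a ∧ l.getLast? = some b ∧
    ∀ v ∈ l, v ∈ inner → v = a ∨ v = b

/-- `l` is an I-cycle: a directed cycle containing exactly one inner vertex. -/
def IsICycle (E : V → V → Prop) (inner : Set V) (l : List V) : Prop :=
  IsDiCycle E l ∧ ∃! v, v ∈ l ∧ v ∈ inner

/-- IC-structure conditions: no I-cycle, and a unique I-path between any
two distinct inner vertices. -/
def ICStructure (E : V → V → Prop) (inner : Set V) : Prop :=
  (∀ l : List V, ¬ IsICycle E inner l) ∧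
  ∀ a ∈ inner, ∀ b ∈ inner, a ≠ b → ∃! l : List V, IsIPath E inner a b l

/-- An outer cycle: a directed cycle all of whose vertices are non-inner. -/
def IsOuterCycle (E : V → V → Prop) (inner : Set V) (l : List V) : Prop :=
  IsDiCycle E l ∧ ∀ v ∈ l, v ∉ inner

/-- Edge relation of the outer-cycle group of `j`: union of all outer
cycles containing `j`. -/
def OCGEdge (E : V → V → Prop) (inner : Set V) (j u w : V) : Prop :=
  ∃ l, IsOuterCycle E inner l ∧ j ∈ l ∧ CycleEdge l u w

/-- Vertex set of the outer-cycle group of `j`. -/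
def OCGVert (E : V → V → Prop) (inner : Set V) (j : V) : Set V :=
  {v | ∃ l, IsOuterCycle E inner l ∧ j ∈ l ∧ v ∈ l}

/-- Edge relation of the rooted tree `T i` of the inner vertex `i`
(the union of all I-paths starting at `i`). -/
def TreeEdge (E : V → V → Prop) (inner : Set V) (i u w : V) : Prop :=
  ∃ b ∈ inner, b ≠ i ∧ ∃ l, IsIPath E inner i b l ∧ ConsecIn l u w

/-- Vertex set of the rooted tree `T i` of the inner vertex `i`. -/
def TreeVert (E : V → V → Prop) (inner : Set V) (i : V) : Set V :=
  {v | ∃ b ∈ inner, b ≠ i ∧ ∃ l, IsIPath E inner i b l ∧ v ∈ l}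

/-- Non-inner vertices of the rooted tree `T i`. -/
def VNI (E : V → V → Prop) (inner : Set V) (i : V) : Set V :=
  TreeVert E inner i \ inner

/-- Vertices lying on some outer cycle. -/
def VOC (E : V → V → Prop) (inner : Set V) : Set V :=
  {v | ∃ c, IsOuterCycle E inner c ∧ v ∈ c}

/-- `N⁺_C(j)`: out-neighborhood of `j` restricted to its outer-cycle group. -/
def NCout (E : V → V → Prop) (inner : Set V) (j : V) : Set V :=
  {q | q ∈ OCGVert E inner j ∧ E j q}

/-- Two non-inner vertices have the same outer-cycle group. -/
def SameOCG (E : V → V → Prop) (inner : Set V) (j j' : V) : Prop :=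
  OCGEdge E inner j = OCGEdge E inner j'

/-- The outer-cycle group of `j` is a proper subgraph of that of `j'`. -/
def OCGProperSub (E : V → V → Prop) (inner : Set V) (j j' : V) : Prop :=
  (∀ u w, OCGEdge E inner j u w → OCGEdge E inner j' u w) ∧ ¬ SameOCG E inner j j'

/-- In-degree of `u` inside the outer-cycle group of `j`. -/
noncomputable def inDegOCG (E : V → V → Prop) (inner : Set V) (j u : V) : ℕ :=
  Set.ncard {w | OCGEdge E inner j w u}

/-- `j₁` is the central cycle vertex (CCV) of a maximal outer-cycle group (MOCG):
non-inner, lying on at least two distinct outer cycles, its outer-cycle group is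
not a proper subgraph of any other one, and it has strictly largest in-degree
among the vertices sharing its outer-cycle group. -/
def IsCCV (E : V → V → Prop) (inner : Set V) (j₁ : V) : Prop :=
  j₁ ∉ inner ∧
  (∃ c₁ c₂, IsOuterCycle E inner c₁ ∧ IsOuterCycle E inner c₂ ∧ j₁ ∈ c₁ ∧ j₁ ∈ c₂ ∧
    ({x | x ∈ c₁} : Set V) ≠ {x | x ∈ c₂}) ∧
  (∀ j', j' ∉ inner → ¬ OCGProperSub E inner j₁ j') ∧
  (∀ j', j' ∉ inner → SameOCG E inner j' j₁ →
    j' = j₁ ∨ inDegOCG E inner j₁ j' < inDegOCG E inner j₁ j₁)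

/-- Pre-central cycle vertex set of `j₁`: vertices of its MOCG having `j₁` as
out-neighbor within the MOCG. -/
def PreC (E : V → V → Prop) (inner : Set V) (j₁ : V) : Set V :=
  {w | OCGEdge E inner j₁ w j₁}

/-- Number of outer cycles (identified by their vertex sets) in the
outer-cycle group of `j₁`. -/
noncomputable def numOC (E : V → V → Prop) (inner : Set V) (j₁ : V) : ℕ :=
  Set.ncard {s : Set V | ∃ c, IsOuterCycle E inner c ∧ j₁ ∈ c ∧ s = {x | x ∈ c}}

/-- The MOCG with CCV `j₁` is isolated: none of its outer cycles belongs to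
another MOCG. -/
def IsolatedCCV (E : V → V → Prop) (inner : Set V) (j₁ : V) : Prop :=
  IsCCV E inner j₁ ∧ ∀ c, IsOuterCycle E inner c → j₁ ∈ c →
    ∀ j₂, IsCCV E inner j₂ → j₂ ∈ c → SameOCG E inner j₂ j₁

/-- Non-inner vertices of `T i` lying on outer cycles. -/
def VNIC (E : V → V → Prop) (inner : Set V) (i : V) : Set V :=
  {v | v ∈ VNI E inner i ∧ v ∈ VOC E inner}

/-- `V'_NI(i)`: union of the outer-cycle groups of the vertices of `VNIC i`. -/
def VNI' (E : V → V → Prop) (inner : Set V) (i : V) : Set V :=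
  {v | ∃ j ∈ VNIC E inner i, v ∈ OCGVert E inner j}

section StmtNineProofs

private theorem List.chain'_append {R : V → V → Prop} {l₁ l₂ : List V} :
    List.Chain' R (l₁ ++ l₂) ↔ List.Chain' R l₁ ∧ List.Chain' R l₂ ∧
      ∀ x ∈ l₁.getLast?, ∀ y ∈ l₂.head?, R x y :=
  List.isChain_append

variable {E : V → V → Prop} {inner : Set V}

private lemma dup_decomp {l : List V} (h : ¬ l.Nodup) :
    ∃ (x : V) (l₁ l₂ l₃ : List V), l = l₁ ++ x :: l₂ ++ x :: l₃ := by
  obtain ⟨x, hx⟩ := List.exists_duplicate_iff_not_nodup.2 h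
  have hs : [x, x].Sublist l := List.duplicate_iff_sublist.1 hx
  rw [List.cons_sublist_iff] at hs
  obtain ⟨r₁, r₂, rfl, hx1, hx2⟩ := hs
  have hx2' : x ∈ r₂ := List.singleton_sublist.1 hx2
  obtain ⟨a₁, a₂, rfl⟩ := List.append_of_mem hx1
  obtain ⟨b₁, b₂, rfl⟩ := List.append_of_mem hx2'
  exact ⟨x, a₁, a₂ ++ b₁, b₂, by simp⟩

private lemma eq_head_or_mem_tail {l : List V} (h : l ≠ []) {z : V} (hz : z ∈ l) :
    z = l.head h ∨ z ∈ l.tail := by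
  obtain ⟨a, t, rfl⟩ := List.exists_cons_of_ne_nil h
  simpa using hz

private lemma mem_dropLast_or_eq {l : List V} (h : l ≠ []) {z : V} (hz : z ∈ l) :
    z ∈ l.dropLast ∨ z = l.getLast h := by
  rw [← List.dropLast_append_getLast h] at hz
  simpa using hz

private lemma mem_tail_aux {l₁ l₂ : List V} {z : V} (hne : l₁ ≠ []) (hz : z ∈ l₂) :
    z ∈ (l₁ ++ l₂).tail := by
  obtain ⟨a, t, rfl⟩ := List.exists_cons_of_ne_nil hne
  simpa using List.mem_append_right t hz

private lemma no_closed_walk (hirr : ∀ x, ¬ E x x) (h4 : ∀ l, ¬ IsOuterCycle E inner l) :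
    ∀ (n : ℕ) (m : List V), m.length ≤ n → ∀ (hm : m ≠ []), m.Chain' E →
      E (m.getLast hm) (m.head hm) → (∀ x ∈ m, x ∉ inner) → False := by
  intro n
  induction n with
  | zero =>
    intro m hlen hm _ _ _
    exact hm (List.length_eq_zero_iff.1 (Nat.le_zero.1 hlen))
  | succ n ih =>
    intro m hlen hm hchain hclose hni
    by_cases hnd : m.Nodup
    · rcases Nat.lt_or_ge m.length 2 with h2 | h2
      · have h1 : m.length = 1 := by
          have := List.length_pos_iff.2 hm
          omega
        obtain ⟨x, rfl⟩ := List.length_eq_one_iff.1 h1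
        exact hirr x (by simpa using hclose)
      · exact h4 m ⟨⟨h2, hnd, hchain, fun _ => hclose⟩, hni⟩
    · obtain ⟨x, l₁, l₂, l₃, rfl⟩ := dup_decomp hnd
      have hm' : (x :: l₂ : List V) ≠ [] := by simp
      apply ih (x :: l₂) ?_ hm' ?_ ?_ ?_
      · simp only [List.length_append, List.length_cons] at hlen ⊢
        omega
      · exact hchain.infix ⟨l₁, x :: l₃, by simp⟩
      · have hsuf : List.Chain' E ((x :: l₂) ++ x :: l₃) :=
          hchain.suffix ⟨l₁, by simp⟩
        rw [List.chain'_append] at hsuf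
        have := hsuf.2.2 ((x :: l₂).getLast hm') (List.getLast?_eq_getLast hm') x rfl
        simpa using this
      · intro y hy
        apply hni y
        rcases List.mem_cons.1 hy with rfl | h
        · simp
        · simp [h]

private lemma seg_false (hirr : ∀ x, ¬ E x x) (h4 : ∀ l, ¬ IsOuterCycle E inner l)
    {w₁ w₂ w₃ : List V} {y : V}
    (hchain : List.Chain' E (w₁ ++ y :: w₂ ++ y :: w₃))
    (hni : ∀ x ∈ y :: w₂, x ∉ inner) : False := by
  have hm : (y :: w₂ : List V) ≠ [] := by simp
  apply no_closed_walk hirr h4 (y :: w₂).length (y :: w₂) le_rfl hm ?_ ?_ hni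
  · exact hchain.infix ⟨w₁, y :: w₃, by simp⟩
  · have hsuf : List.Chain' E ((y :: w₂) ++ y :: w₃) := hchain.suffix ⟨w₁, by simp⟩
    rw [List.chain'_append] at hsuf
    have := hsuf.2.2 ((y :: w₂).getLast hm) (List.getLast?_eq_getLast hm) y rfl
    simpa using this

private lemma key_lemma (hIC : ICStructure E inner) (hirr : ∀ x, ¬ E x x)
    (h4 : ∀ l, ¬ IsOuterCycle E inner l)
    {p s : List V} {i c v j : V}
    (hp : p ≠ []) (hpc : List.Chain' E p) (hpn : p.Nodup)
    (hph : p.head? = some i) (hii : i ∈ inner)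
    (hpt : ∀ x ∈ p.tail, x ∉ inner)
    (hs : s ≠ []) (hsc : List.Chain' E s) (hsn : s.Nodup)
    (hsl : s.getLast? = some c) (hci : c ∈ inner)
    (hsf : ∀ x ∈ s.dropLast, x ∉ inner)
    (hpv : p.getLast? = some v) (hsj : s.head? = some j)
    (hE : E v j) :
    IsIPath E inner i c (p ++ s) ∧ i ≠ c := by
  -- convert option facts to head/getLast facts
  have hI : p.head hp = i := by
    rw [List.head?_eq_head hp] at hph; exact Option.some_injective _ hph
  have hV : p.getLast hp = v := by
    rw [List.getLast?_eq_getLast hp] at hpv; exact Option.some_injective _ hpv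
  have hJ : s.head hs = j := by
    rw [List.head?_eq_head hs] at hsj; exact Option.some_injective _ hsj
  have hC : s.getLast hs = c := by
    rw [List.getLast?_eq_getLast hs] at hsl; exact Option.some_injective _ hsl
  -- the whole walk is a chain
  have hWchain : List.Chain' E (p ++ s) := by
    rw [List.chain'_append]
    refine ⟨hpc, hsc, ?_⟩
    intro a ha b hb
    rw [hpv] at ha
    rw [hsj] at hb
    obtain rfl := (Option.mem_some_iff.1 ha)
    obtain rfl := (Option.mem_some_iff.1 hb)
    exact hE
  -- impossibility of a non-inner common vertex
  have key : ∀ x, x ∈ p → x ∈ s → x ∉ inner → False := by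
    intro x hxp hxs hxni
    obtain ⟨p₁, p₂, hpdec⟩ := List.append_of_mem hxp
    obtain ⟨s₁, s₂, hsdec⟩ := List.append_of_mem hxs
    apply seg_false hirr h4 (w₁ := p₁) (w₂ := p₂ ++ s₁) (w₃ := s₂) (y := x) ?_ ?_
    · have heq : p ++ s = p₁ ++ x :: (p₂ ++ s₁) ++ x :: s₂ := by
        rw [hpdec, hsdec]; simp
      rw [← heq]; exact hWchain
    · intro z hz
      rcases List.mem_cons.1 hz with rfl | hz'
      · exact hxni
      · rcases List.mem_append.1 hz' with h | h
        · apply hpt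
          have h2 : z ∈ ((p₁ ++ [x]) ++ p₂).tail := mem_tail_aux (by simp) h
          rw [hpdec]
          simpa using h2
        · apply hsf
          rw [hsdec]
          rw [List.dropLast_append_of_ne_nil (by simp : (x :: s₂ : List V) ≠ [])]
          exact List.mem_append_left _ h
  -- impossibility of any common vertex
  have keyI : ∀ x, x ∈ p → x ∈ s → False := by
    intro x hxp hxs
    by_cases hxi : x ∈ inner
    case neg => exact key x hxp hxs hxi
    have hxI : x = i := by
      rcases eq_head_or_mem_tail hp hxp with h | h
      · rw [h, hI]
      · exact absurd hxi (hpt x h)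
    have hxC : x = c := by
      rcases mem_dropLast_or_eq hs hxs with h | h
      · exact absurd hxi (hsf x h)
      · rw [h, hC]
    have hic : i = c := hxI ▸ hxC
    clear hxI hxC hxp hxs hxi
    -- now derive a contradiction: there is an I-cycle or an outer cycle
    by_cases hmd : (p ++ s.dropLast).Nodup
    · -- I-cycle
      have hmne : p ++ s.dropLast ≠ [] := by simp [hp]
      have hmhead : (p ++ s.dropLast).head hmne = i := by
        have := List.head?_append_of_ne_nil p (l₂ := s.dropLast) hp
        rw [List.head?_eq_head hmne, List.head?_eq_head hp, hI] at this
        exact Option.some_injective _ this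
      rcases Nat.lt_or_ge (p ++ s.dropLast).length 2 with h2 | h2
      · -- degenerate: p and s are singletons, E i i
        rw [List.length_append] at h2
        have hp1 : 0 < p.length := List.length_pos_iff.2 hp
        have hs1 : 0 < s.length := List.length_pos_iff.2 hs
        have hds : s.dropLast.length = s.length - 1 := List.length_dropLast
        obtain ⟨a, rfl⟩ := List.length_eq_one_iff.1 (by omega : p.length = 1)
        obtain ⟨b, rfl⟩ := List.length_eq_one_iff.1 (by omega : s.length = 1)
        simp at hI hV hJ hC
        rw [hI] at hV; rw [hJ] at hC
        rw [← hV, hic, hC] at hE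
        exact hirr c hE
      · -- genuine I-cycle
        have hmchain : List.Chain' E (p ++ s.dropLast) := by
          rw [List.chain'_append]
          refine ⟨hpc, hsc.prefix (List.dropLast_prefix s), ?_⟩
          intro a ha b hb
          have hdne : s.dropLast ≠ [] := by
            intro hnil
            rw [hnil] at hb; simp at hb
          rw [hpv] at ha
          obtain rfl := Option.mem_some_iff.1 ha
          rw [List.head?_eq_head hdne] at hb
          obtain rfl := Option.mem_some_iff.1 hb
          have hheads : s.dropLast.head hdne = j := by
            have h := List.head?_append_of_ne_nil s.dropLast (l₂ := [s.getLast hs]) hdne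
            rw [List.dropLast_append_getLast hs, hsj, List.head?_eq_head hdne] at h
            exact (Option.some_injective _ h).symm
          rw [hheads]
          exact hE
        have hmclose : E ((p ++ s.dropLast).getLast hmne) ((p ++ s.dropLast).head hmne) := by
          rw [hmhead]
          by_cases hdne : s.dropLast = []
          · -- s is a singleton; last of m is last of p
            have hml : (p ++ s.dropLast).getLast? = some v := by
              rw [hdne, List.append_nil, hpv]
            rw [List.getLast?_eq_getLast hmne] at hml
            rw [show (p ++ s.dropLast).getLast hmne = v from Option.some_injective _ hml]
            have hs1 : s.length = 1 := by
              have h1 := List.length_dropLast (xs := s)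
              have h2 := List.length_pos_iff.2 hs
              rw [hdne] at h1
              simp at h1
              omega
            obtain ⟨b, rfl⟩ := List.length_eq_one_iff.1 hs1
            simp at hJ hC
            rw [hic, ← hC, hJ]
            exact hE
          · have hmlast : (p ++ s.dropLast).getLast hmne = s.dropLast.getLast hdne := by
              have := List.getLast?_append_of_ne_nil p (l₂ := s.dropLast) hdne
              rw [List.getLast?_eq_getLast hmne, List.getLast?_eq_getLast hdne] at this
              exact Option.some_injective _ this
            rw [hmlast]
            -- E (last of dropLast) c, and c = i
            have hcc : E (s.dropLast.getLast hdne) c := by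
              have hsplit : s = s.dropLast ++ [s.getLast hs] :=
                (List.dropLast_append_getLast hs).symm
              have hsc' := hsc
              rw [hsplit, List.chain'_append] at hsc'
              have := hsc'.2.2 (s.dropLast.getLast hdne)
                (List.getLast?_eq_getLast hdne) (s.getLast hs) rfl
              rwa [hC] at this
            rw [← hic] at hcc
            exact hcc
        have hicy : IsICycle E inner (p ++ s.dropLast) := by
          refine ⟨⟨h2, hmd, hmchain, fun _ => hmclose⟩, i, ⟨?_, hii⟩, ?_⟩
          · rw [← hmhead]; exact List.head_mem hmne
          · rintro y ⟨hym, hyi⟩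
            rcases List.mem_append.1 hym with h | h
            · rcases eq_head_or_mem_tail hp h with h' | h'
              · rw [h', hI]
              · exact absurd hyi (hpt y h')
            · exact absurd hyi (hsf y h)
        exact hIC.1 _ hicy
    · -- non-inner overlap between p and s.dropLast
      have hdn : s.dropLast.Nodup :=
        List.Nodup.sublist (List.dropLast_prefix s).sublist hsn
      have hex : ∃ z, z ∈ p ∧ z ∈ s.dropLast := by
        by_contra hno
        push_neg at hno
        exact hmd (List.nodup_append.2 ⟨hpn, hdn, fun a ha b hb hab => hno a ha (hab ▸ hb)⟩)
      obtain ⟨z, hz1, hz2⟩ := hex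
      exact key z hz1 (List.dropLast_subset s hz2) (hsf z hz2)
  -- assemble
  have hWnodup : (p ++ s).Nodup :=
    List.nodup_append.2 ⟨hpn, hsn, fun a ha b hb hab => keyI a ha (hab ▸ hb)⟩
  have hine : i ≠ c := by
    intro h
    apply keyI i
    · rw [← hI]; exact List.head_mem hp
    · rw [h, ← hC]; exact List.getLast_mem hs
  refine ⟨⟨⟨hWchain, hWnodup⟩, ?_, ?_, ?_⟩, hine⟩
  · rw [List.head?_append_of_ne_nil p hp, hph]
  · rw [List.getLast?_append_of_ne_nil p hs, hsl]
  · intro w hw hwi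
    rcases List.mem_append.1 hw with h | h
    · left
      rcases eq_head_or_mem_tail hp h with h' | h'
      · rw [h', hI]
      · exact absurd hwi (hpt w h')
    · right
      rcases mem_dropLast_or_eq hs h with h' | h'
      · exact absurd hwi (hsf w h')
      · rw [h', hC]

private lemma head_not_mem_tail {l : List V} (h : l ≠ []) (hn : l.Nodup) :
    l.head h ∉ l.tail := by
  obtain ⟨x, t, rfl⟩ := List.exists_cons_of_ne_nil h
  simpa using (List.nodup_cons.1 hn).1

private lemma getLast_not_mem_dropLast {l : List V} (h : l ≠ []) (hn : l.Nodup) :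
    l.getLast h ∉ l.dropLast := by
  rw [← List.dropLast_append_getLast h] at hn
  intro hmem
  exact (List.nodup_append.1 hn).2.2 _ hmem (l.getLast h) (by simp) rfl

private lemma tail_subset_append {l₁ : List V} (l₂ : List V) (h : l₁ ≠ []) :
    l₁.tail ⊆ (l₁ ++ l₂).tail := by
  obtain ⟨a, t, rfl⟩ := List.exists_cons_of_ne_nil h
  intro z hz
  simp only [List.tail_cons] at hz
  simp only [List.cons_append, List.tail_cons]
  exact List.mem_append_left _ hz

private lemma prefix_info {a b v : V} {l l₁ l₂ : List V}
    (hl : IsIPath E inner a b l) (hd : l = l₁ ++ v :: l₂) (hv : v ∉ inner) :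
    List.Chain' E (l₁ ++ [v]) ∧ (l₁ ++ [v]).Nodup ∧ (l₁ ++ [v]).head? = some a ∧
      (∀ x ∈ (l₁ ++ [v]).tail, x ∉ inner) ∧ (l₁ ++ [v]).getLast? = some v := by
  have hsplit : l = (l₁ ++ [v]) ++ l₂ := by rw [hd]; simp
  have hpre : (l₁ ++ [v]) <+: l := ⟨l₂, hsplit.symm⟩
  have hlne : l ≠ [] := by rw [hd]; simp
  have hglast : (l₁ ++ [v]).getLast? = some v := by
    rw [List.getLast?_append_of_ne_nil l₁ (l₂ := [v]) (by simp)]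
    simp
  refine ⟨hl.1.1.prefix hpre, List.Nodup.sublist hpre.sublist hl.1.2, ?_, ?_, hglast⟩
  · have h := List.head?_append_of_ne_nil (l₁ ++ [v]) (l₂ := l₂) (by simp)
    rw [← hsplit] at h
    rw [← h, hl.2.1]
  · intro x hx hxi
    have hxp : x ∈ l₁ ++ [v] := List.mem_of_mem_tail hx
    have hxl : x ∈ l := hpre.mem hxp
    rcases hl.2.2.2 x hxl hxi with rfl | rfl
    · -- x = a is the head of l, cannot be in the tail
      have hxt : x ∈ l.tail := by
        rw [hsplit]
        exact tail_subset_append l₂ (by simp) hx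
      have hha : l.head hlne = x := by
        have h := hl.2.1
        rw [List.head?_eq_head hlne] at h
        exact Option.some_injective _ h
      exact head_not_mem_tail hlne hl.1.2 (hha ▸ hxt)
    · -- x = b is the last of l
      by_cases h2 : l₂ = []
      · -- then l = l₁ ++ [v] and b = v, contradicting v ∉ inner
        have : l.getLast? = some v := by
          rw [hsplit, h2, List.append_nil, hglast]
        rw [hl.2.2.1] at this
        exact hv ((Option.some_injective _ this) ▸ hxi)
      · have hxdl : x ∈ l.dropLast := by
          rw [hsplit, List.dropLast_append_of_ne_nil h2]
          exact List.mem_append_left _ hxp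
        have hhb : l.getLast hlne = x := by
          have h := hl.2.2.1
          rw [List.getLast?_eq_getLast hlne] at h
          exact Option.some_injective _ h
        exact getLast_not_mem_dropLast hlne hl.1.2 (hhb ▸ hxdl)

private lemma suffix_info {a b j : V} {l l₁ l₂ : List V}
    (hl : IsIPath E inner a b l) (hd : l = l₁ ++ j :: l₂) (hne : l₁ ≠ []) :
    List.Chain' E (j :: l₂) ∧ (j :: l₂).Nodup ∧ (j :: l₂).getLast? = some b ∧
      (∀ x ∈ (j :: l₂).dropLast, x ∉ inner) := by
  have hsuf : (j :: l₂) <:+ l := ⟨l₁, hd.symm⟩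
  have hsn : (j :: l₂).Nodup := List.Nodup.sublist hsuf.sublist hl.1.2
  have hgl : (j :: l₂).getLast? = some b := by
    rw [← hl.2.2.1, hd, List.getLast?_append_of_ne_nil l₁ (by simp)]
  refine ⟨hl.1.1.suffix hsuf, hsn, hgl, ?_⟩
  intro x hx hxi
  have hxs : x ∈ (j :: l₂) := List.dropLast_subset _ hx
  have hxl : x ∈ l := hsuf.sublist.subset hxs
  rcases hl.2.2.2 x hxl hxi with rfl | rfl
  · -- x = a is the head of l, which lies in l₁; contradicts nodup
    have hnd := hl.1.2
    rw [hd] at hnd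
    have hdisj := (List.nodup_append.1 hnd).2.2
    have hal : x ∈ l₁ := by
      have h := hl.2.1
      rw [hd, List.head?_append_of_ne_nil l₁ hne, List.head?_eq_head hne] at h
      exact (Option.some_injective _ h) ▸ List.head_mem hne
    exact hdisj _ hal _ hxs rfl
  · -- x = b is the last of j :: l₂, not in its dropLast
    have hhb : (j :: l₂).getLast (by simp) = x := by
      rw [List.getLast?_eq_getLast (by simp : (j :: l₂ : List V) ≠ [])] at hgl
      exact Option.some_injective _ hgl
    exact getLast_not_mem_dropLast (by simp) hsn (hhb ▸ hx)

private lemma irrefl_of_h3 (h3 : ∀ u w, E u w → ∃ i ∈ inner, TreeEdge E inner i u w) :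
    ∀ x, ¬ E x x := by
  intro x hx
  obtain ⟨i, _, b, _, _, l, hl, l₁, l₂, hdec⟩ := h3 x x hx
  have hnd := hl.1.2
  rw [hdec] at hnd
  have h2 := (List.nodup_append.1 hnd).2.1
  exact (List.nodup_cons.1 h2).1 List.mem_cons_self

private lemma mem_treeVert_of_edge (hIC : ICStructure E inner)
    (h3 : ∀ u w, E u w → ∃ i ∈ inner, TreeEdge E inner i u w)
    (h4 : ∀ l, ¬ IsOuterCycle E inner l) {i v j : V} (hi : i ∈ inner)
    (hv : v ∈ VNI E inner i) (hvj : E v j) : j ∈ TreeVert E inner i := by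
  have hirr := irrefl_of_h3 h3
  obtain ⟨hvT, hvni⟩ := hv
  obtain ⟨b, hb, hbne, l, hl, hvl⟩ := hvT
  obtain ⟨l₁, l₂, hdec⟩ := List.append_of_mem hvl
  obtain ⟨hpc, hpn, hph, hpt, hpv⟩ := prefix_info hl hdec hvni
  by_cases hji : j ∈ inner
  · by_cases hjieq : j = i
    · subst hjieq
      refine ⟨b, hb, hbne, l, hl, ?_⟩
      have hlne : l ≠ [] := by rw [hdec]; simp
      have h := hl.2.1
      rw [List.head?_eq_head hlne] at h
      exact (Option.some_injective _ h) ▸ List.head_mem hlne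
    · have hkey := key_lemma hIC hirr h4 (p := l₁ ++ [v]) (s := [j])
        (by simp) hpc hpn hph hi hpt (by simp) (List.isChain_singleton j) (by simp)
        (by simp) hji (by simp) hpv (by simp) hvj
      exact ⟨j, hji, hjieq, (l₁ ++ [v]) ++ [j], hkey.1, by simp⟩
  · obtain ⟨i', hi', b', hb', hbne', l', hl', m₁, m₂, hdec'⟩ := h3 v j hvj
    have hdec'' : l' = (m₁ ++ [v]) ++ j :: m₂ := by rw [hdec']; simp
    obtain ⟨hsc, hsn, hsl, hsf⟩ := suffix_info hl' hdec'' (by simp)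
    have hkey := key_lemma hIC hirr h4 (p := l₁ ++ [v]) (s := j :: m₂)
      (by simp) hpc hpn hph hi hpt (by simp) hsc hsn hsl hb' hsf hpv rfl hvj
    exact ⟨b', hb', fun h => hkey.2 h.symm, (l₁ ++ [v]) ++ j :: m₂, hkey.1, by simp⟩

end StmtNineProofs

/-- in an IC structure without outer cycles (all four conditions),
conditions c1 and c2 hold automatically: every non-inner `j` at depth ≥ 2 in
`T i` has `a i j` odd, and every `j` outside `T i` has `b i j = 0`. -/
theorem stmt9 {V : Type*} [Fintype V] (E : V → V → Prop) (inner : Set V)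
    (hIC : ICStructure E inner)
    (h3 : ∀ u w, E u w → ∃ i ∈ inner, TreeEdge E inner i u w)
    (h4 : ∀ l : List V, ¬ IsOuterCycle E inner l) :
    (∀ i ∈ inner, ∀ j ∈ VNI E inner i, ¬ TreeEdge E inner i i j →
      Odd (Set.ncard {v | v ∈ VNI E inner i ∧ E v j})) ∧
    (∀ i ∈ inner, ∀ j, j ∉ TreeVert E inner i →
      Set.ncard {v | v ∈ VNI E inner i ∧ E v j} = 0) := by
  have hirr := irrefl_of_h3 h3
  constructor
  · -- c1: the in-degree within VNI of a depth ≥ 2 vertex is odd (in fact 1)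
    intro i hi j hj hnedge
    obtain ⟨hjT, hjni⟩ := hj
    obtain ⟨c, hc, hcne, Q, hQ, hjQ⟩ := hjT
    obtain ⟨q₁, q₂, hQdec⟩ := List.append_of_mem hjQ
    have hq₁ : q₁ ≠ [] := by
      rintro rfl
      have h := hQ.2.1
      rw [hQdec] at h
      simp at h
      exact hjni (h ▸ hi)
    obtain ⟨hsc, hsn, hsl, hsf⟩ := suffix_info hQ hQdec hq₁
    have hEuj : E (q₁.getLast hq₁) j := by
      have h := hQ.1.1
      rw [hQdec, List.chain'_append] at h
      exact h.2.2 _ (List.getLast?_eq_getLast hq₁) j rfl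
    have huQ : q₁.getLast hq₁ ∈ Q := by
      rw [hQdec]; exact List.mem_append_left _ (List.getLast_mem hq₁)
    have huni : q₁.getLast hq₁ ∉ inner := by
      intro huI
      rcases hQ.2.2.2 _ huQ huI with h | h
      · -- the parent is i itself: contradicts depth ≥ 2
        apply hnedge
        refine ⟨c, hc, hcne, Q, hQ, q₁.dropLast, q₂, ?_⟩
        rw [hQdec, ← h]
        conv_lhs => rw [← List.dropLast_append_getLast hq₁]
        simp
      · -- the parent equals the endpoint c: contradicts nodup
        have hnd := hQ.1.2
        rw [hQdec] at hnd
        have hdisj := (List.nodup_append.1 hnd).2.2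
        have hcQ : c ∈ j :: q₂ := by
          have hg := hsl
          rw [List.getLast?_eq_getLast (by simp : (j :: q₂ : List V) ≠ [])] at hg
          exact (Option.some_injective _ hg) ▸ List.getLast_mem _
        exact hdisj _ (List.getLast_mem hq₁) (q₁.getLast hq₁) (h.symm ▸ hcQ) rfl
    have huVNI : q₁.getLast hq₁ ∈ VNI E inner i := ⟨⟨c, hc, hcne, Q, hQ, huQ⟩, huni⟩
    have hset : {x | x ∈ VNI E inner i ∧ E x j} = {q₁.getLast hq₁} := by
      ext w
      simp only [Set.mem_setOf_eq, Set.mem_singleton_iff]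
      constructor
      · rintro ⟨hw, hwj⟩
        obtain ⟨hwT, hwni⟩ := hw
        obtain ⟨b, hb, hbne, l, hl, hwl⟩ := hwT
        obtain ⟨l₁, l₂, hdec⟩ := List.append_of_mem hwl
        obtain ⟨hpc, hpn, hph, hpt, hpv⟩ := prefix_info hl hdec hwni
        have hkey := key_lemma hIC hirr h4 (p := l₁ ++ [w]) (s := j :: q₂)
          (by simp) hpc hpn hph hi hpt (by simp) hsc hsn hsl hc hsf hpv rfl hwj
        have huniq := hIC.2 i hi c hc hkey.2
        have heq : (l₁ ++ [w]) ++ j :: q₂ = Q := huniq.unique hkey.1 hQ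
        rw [hQdec] at heq
        have happ : l₁ ++ [w] = q₁ := List.append_cancel_right heq
        have hween : q₁.getLast? = some w := by rw [← happ, hpv]
        rw [List.getLast?_eq_getLast hq₁] at hween
        exact (Option.some_injective _ hween).symm
      · rintro rfl
        exact ⟨huVNI, hEuj⟩
    rw [hset, Set.ncard_singleton]
    exact odd_one
  · -- c2: no edges leave the tree
    intro i hi j hjT
    have hempty : {x | x ∈ VNI E inner i ∧ E x j} = ∅ := by
      ext w
      simp only [Set.mem_setOf_eq, Set.mem_empty_iff_false, iff_false, not_and]
      intro hw hwj
      exact hjT (mem_treeVert_of_edge hIC h3 h4 hi hw hwj)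
    rw [hempty]
    exact Set.ncard_empty _
end

section
/- In an IC structure, for each inner vertex i the union of the unique I-paths from i to all other inner vertices forms a tree rooted at i: every vertex of this union other than i has a unique predecessor, and there are no cycles in the union. -/
open scoped BigOperators

variable {V : Type*}

section stmt12aux

variable {E : V → V → Prop} {inner : Set V}

lemma split_unique {v : V} : ∀ {p₁ p₂ s₁ s₂ : List V},
    p₁ ++ v :: s₁ = p₂ ++ v :: s₂ → v ∉ p₁ → v ∉ p₂ → p₁ = p₂ ∧ s₁ = s₂ := by
  intro p₁
  induction p₁ with
  | nil =>
    intro p₂ s₁ s₂ h h1 h2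
    cases p₂ with
    | nil => simpa using h
    | cons a t =>
      exfalso
      simp only [List.nil_append, List.cons_append, List.cons.injEq] at h
      exact h2 (h.1 ▸ (List.mem_cons_self : a ∈ a :: t))
  | cons a t ih =>
    intro p₂ s₁ s₂ h h1 h2
    cases p₂ with
    | nil =>
      exfalso
      simp only [List.nil_append, List.cons_append, List.cons.injEq] at h
      exact h1 (h.1 ▸ (List.mem_cons_self : a ∈ a :: t))
    | cons c t₂ =>
      simp only [List.cons_append, List.cons.injEq] at h
      obtain ⟨hp, hs⟩ := ih h.2 (fun hv => h1 (List.mem_cons_of_mem _ hv))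
        (fun hv => h2 (List.mem_cons_of_mem _ hv))
      exact ⟨by rw [h.1, hp], hs⟩

lemma head_prefix_nil {i : V} : ∀ {q r : List V}, (q ++ i :: r).Nodup →
    (q ++ i :: r).head? = some i → q = [] := by
  intro q r hn hh
  cases q with
  | nil => rfl
  | cons c t =>
    exfalso
    simp only [List.cons_append, List.head?_cons, Option.some.injEq] at hh
    subst hh
    rw [List.nodup_append] at hn
    exact hn.2.2 c (List.mem_cons_self : c ∈ c :: t) c (List.mem_cons_self : c ∈ c :: r) rfl

lemma prefix_unique (hIC : ICStructure E inner) {i : V} (hi : i ∈ inner) :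
    ∀ (n : ℕ) {b b' w : V} {p s p' s' : List V}, p'.length = n →
      b ∈ inner → b' ∈ inner → b ≠ i → b' ≠ i →
      IsIPath E inner i b (p ++ w :: s) → IsIPath E inner i b' (p' ++ w :: s') →
      p = p' := by
  intro n
  induction n using Nat.strong_induction_on with
  | _ n ih =>
  intro b b' w p s p' s' hlen hb hb' hbi hb'i hl hl'
  obtain ⟨⟨hch, hnd⟩, hhd, hlast, hinn⟩ := hl
  obtain ⟨⟨hch', hnd'⟩, hhd', hlast', hinn'⟩ := hl'
  rw [List.nodup_append] at hnd hnd'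
  have hwp : w ∉ p := fun h => hnd.2.2 w h w (by simp) rfl
  have hwp' : w ∉ p' := fun h => hnd'.2.2 w h w (by simp) rfl
  by_cases hw : w ∈ inner
  · rcases hinn w (by simp) hw with h1 | h1
    · subst h1
      rw [head_prefix_nil (List.nodup_append.mpr hnd) hhd,
        head_prefix_nil (List.nodup_append.mpr hnd') hhd']
    · subst h1
      rcases hinn' w (by simp) hw with h2 | h2
      · exact absurd h2 hbi
      · subst h2
        obtain ⟨u, -, huni⟩ := hIC.2 i hi w hw (fun h => hbi h.symm)
        have heq := (huni _ ⟨⟨hch, List.nodup_append.mpr hnd⟩, hhd, hlast, hinn⟩).trans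
          (huni _ ⟨⟨hch', List.nodup_append.mpr hnd'⟩, hhd', hlast', hinn'⟩).symm
        exact (split_unique heq hwp hwp').1
  · have hlastw : (w :: s).getLast? = some b := by
      rwa [List.getLast?_append_of_ne_nil _ (by simp)] at hlast
    have hlastw' : (w :: s').getLast? = some b' := by
      rwa [List.getLast?_append_of_ne_nil _ (by simp)] at hlast'
    by_cases hnd2 : (p' ++ w :: s).Nodup
    · have hW : IsIPath E inner i b (p' ++ w :: s) := by
        refine ⟨⟨?_, hnd2⟩, ?_, ?_, ?_⟩
        · simp only [List.Chain', List.isChain_append] at hch' ⊢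
          refine ⟨hch'.1, (List.isChain_append.mp hch).2.1, ?_⟩
          simpa using hch'.2.2
        · rw [List.head?_append] at hhd' ⊢
          simpa using hhd'
        · rw [List.getLast?_append_of_ne_nil _ (by simp)]
          exact hlastw
        · intro v hv hvi
          rcases List.mem_append.mp hv with hvp | hvs
          · rcases hinn' v (List.mem_append_left _ hvp) hvi with h | h
            · exact Or.inl h
            · exfalso
              have hbm : b' ∈ w :: s' := by
                obtain ⟨hh, heq⟩ := List.mem_getLast?_eq_getLast hlastw'
                exact heq ▸ List.getLast_mem hh
              exact hnd'.2.2 b' (h ▸ hvp) b' hbm rfl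
          · rcases hinn v (List.mem_append_right _ hvs) hvi with rfl | h
            · exfalso
              cases hp : p with
              | nil =>
                subst hp
                simp only [List.nil_append, List.head?_cons, Option.some.injEq] at hhd
                exact hw (hhd ▸ hi)
              | cons c t =>
                subst hp
                simp only [List.cons_append, List.head?_cons, Option.some.injEq] at hhd
                subst hhd
                exact hnd.2.2 _ (by simp) _ hvs rfl
            · exact Or.inr h
      obtain ⟨u, -, huni⟩ := hIC.2 i hi b hb (fun h => hbi h.symm)
      have heq := (huni _ ⟨⟨hch, by rw [List.nodup_append]; exact hnd⟩, hhd, hlast, hinn⟩).trans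
        (huni _ hW).symm
      exact (split_unique heq hwp hwp').1
    · have hex : ∃ x ∈ p', x ∈ s := by
        by_contra hcon
        push_neg at hcon
        apply hnd2
        rw [List.nodup_append]
        refine ⟨hnd'.1, hnd.2.1, fun x hx y hx2 hxy => ?_⟩
        subst hxy
        rcases List.mem_cons.mp hx2 with rfl | hx2
        · exact hwp' hx
        · exact hcon x hx hx2
      obtain ⟨x, hxp', hxs⟩ := hex
      obtain ⟨p'', s'', rfl⟩ := List.append_of_mem hxp'
      obtain ⟨s₁, s₂, rfl⟩ := List.append_of_mem hxs
      have hlen'' : p''.length < n := by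
        subst hlen; simp [List.length_append]
      have hl2 : IsIPath E inner i b ((p ++ w :: s₁) ++ x :: s₂) := by
        have : (p ++ w :: s₁) ++ x :: s₂ = p ++ w :: (s₁ ++ x :: s₂) := by simp
        rw [this]
        exact ⟨⟨hch, by rw [List.nodup_append]; exact hnd⟩, hhd, hlast, hinn⟩
      have hl'2 : IsIPath E inner i b' (p'' ++ x :: (s'' ++ w :: s')) := by
        have : p'' ++ x :: (s'' ++ w :: s') = (p'' ++ x :: s'') ++ w :: s' := by simp
        rw [this]
        exact ⟨⟨hch', by rw [List.nodup_append]; exact hnd'⟩, hhd', hlast', hinn'⟩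
      have hpeq := ih p''.length hlen'' rfl hb hb' hbi hb'i hl2 hl'2
      exact absurd (hpeq ▸ (by simp : w ∈ p ++ w :: s₁) : w ∈ p'') (fun h => hwp' (by simp [h]))

lemma treeEdge_unique (hIC : ICStructure E inner) {i : V} (hi : i ∈ inner)
    {u u' v : V} (h : TreeEdge E inner i u v) (h' : TreeEdge E inner i u' v) : u = u' := by
  obtain ⟨b, hb, hbi, l, hl, l₁, l₂, rfl⟩ := h
  obtain ⟨b', hb', hb'i, l', hl', l₁', l₂', rfl⟩ := h'
  have h1 : IsIPath E inner i b ((l₁ ++ [u]) ++ v :: l₂) := by simpa using hl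
  have h2 : IsIPath E inner i b' ((l₁' ++ [u']) ++ v :: l₂') := by simpa using hl'
  have := prefix_unique hIC hi _ rfl hb hb' hbi hb'i h1 h2
  have := congrArg List.getLast? this
  simpa [List.getLast?_concat] using this

noncomputable def depthAux (E : V → V → Prop) (inner : Set V) (i v : V) : ℕ :=
  sInf {n | ∃ b ∈ inner, b ≠ i ∧ ∃ l p s, IsIPath E inner i b l ∧ l = p ++ v :: s ∧ p.length = n}

lemma depthAux_set_eq (hIC : ICStructure E inner) {i : V} (hi : i ∈ inner)
    {v : V} {b : V} (hb : b ∈ inner) (hbi : b ≠ i) {p s : List V}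
    (hl : IsIPath E inner i b (p ++ v :: s)) :
    depthAux E inner i v = p.length := by
  have hset : {n | ∃ b ∈ inner, b ≠ i ∧ ∃ l p' s', IsIPath E inner i b l ∧
      l = p' ++ v :: s' ∧ p'.length = n} = {p.length} := by
    apply Set.eq_singleton_iff_unique_mem.mpr
    constructor
    · exact ⟨b, hb, hbi, _, p, s, hl, rfl, rfl⟩
    · rintro n ⟨b₂, hb₂, hb₂i, l₂, p₂, s₂, hl₂, rfl, rfl⟩
      rw [prefix_unique hIC hi _ rfl hb₂ hb hb₂i hbi hl₂ hl]
  unfold depthAux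
  rw [hset, csInf_singleton]

lemma depthAux_step (hIC : ICStructure E inner) {i : V} (hi : i ∈ inner)
    {u v : V} (h : TreeEdge E inner i u v) :
    depthAux E inner i v = depthAux E inner i u + 1 := by
  obtain ⟨b, hb, hbi, l, hl, l₁, l₂, rfl⟩ := h
  have h1 : IsIPath E inner i b ((l₁ ++ [u]) ++ v :: l₂) := by simpa using hl
  have h2 : IsIPath E inner i b (l₁ ++ u :: (v :: l₂)) := hl
  rw [depthAux_set_eq hIC hi hb hbi h1, depthAux_set_eq hIC hi hb hbi h2]
  simp

lemma chain'_incr {f : V → ℕ} {R : V → V → Prop} (hR : ∀ u v, R u v → f v = f u + 1) :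
    ∀ (l : List V) (h : l ≠ []), l.Chain' R → f (l.getLast h) + 1 = f (l.head h) + l.length := by
  intro l
  induction l with
  | nil => simp
  | cons a t ih =>
    intro _ hch
    cases t with
    | nil => simp
    | cons c r =>
      simp only [List.Chain', List.isChain_cons_cons] at hch
      have hrec := ih (by simp) hch.2
      have hstep := hR a c hch.1
      rw [List.getLast_cons (by simp : (c :: r) ≠ [])]
      simp only [List.head_cons, List.length_cons] at hrec ⊢
      omega

end stmt12aux

/-- in an IC structure, for each inner vertex `i` the union of
the unique I-paths from `i` to the other inner vertices is an arborescence
rooted at `i`: every vertex of the union other than `i` has a unique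
predecessor, and the union contains no cycle. -/
theorem stmt12 {V : Type*} [Fintype V] (E : V → V → Prop) (inner : Set V)
    (hIC : ICStructure E inner) (hK : 2 ≤ inner.ncard)
    (i : V) (hi : i ∈ inner) :
    (∀ v ∈ TreeVert E inner i, v ≠ i → ∃! u, TreeEdge E inner i u v) ∧
    (∀ l : List V, ¬ IsDiCycle (TreeEdge E inner i) l) := by
  constructor
  · intro v hv hvi
    obtain ⟨b, hb, hbi, l, hl, hvl⟩ := hv
    obtain ⟨p, s, rfl⟩ := List.append_of_mem hvl
    have hpne : p ≠ [] := by
      intro h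
      subst h
      have := hl.2.1
      simp only [List.nil_append, List.head?_cons, Option.some.injEq] at this
      exact hvi this
    refine ⟨p.getLast hpne, ⟨b, hb, hbi, _, hl, p.dropLast, s, ?_⟩, ?_⟩
    · rw [show p.dropLast ++ p.getLast hpne :: v :: s = (p.dropLast ++ [p.getLast hpne]) ++ v :: s
        by simp, List.dropLast_append_getLast hpne]
    · intro u hu
      exact treeEdge_unique hIC hi hu ⟨b, hb, hbi, _, hl, p.dropLast, s, by
        rw [show p.dropLast ++ p.getLast hpne :: v :: s = (p.dropLast ++ [p.getLast hpne]) ++ v :: s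
          by simp, List.dropLast_append_getLast hpne]⟩
  · intro l hcyc
    obtain ⟨hlen, hnd, hch, hclose⟩ := hcyc
    have hne : l ≠ [] := by intro h; subst h; simp at hlen
    have hstep : ∀ u v, TreeEdge E inner i u v →
        depthAux E inner i v = depthAux E inner i u + 1 :=
      fun u v h => depthAux_step hIC hi h
    have h1 := chain'_incr hstep l hne hch
    have h2 := hstep _ _ (hclose hne)
    omega
end
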